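/- arXiv:math/0105100 — 6 statements merged into one kernel-verified Lean document; each statement's English description precedes it below -/
import Mathlib

section
/- For every natural number n and every real number x, ∑_{l=1}^{n} C(n,l)·x^l/l = ∑_{l=1}^{n} ((1+x)^l − 1)/l. -/
open Finset

lemma aux_binom (n : ℕ) (x : ℝ) :
    ∑ l ∈ Finset.Icc 1 (n+1), ((n+1).choose l : ℝ) * x ^ l = (1+x)^(n+1) - 1 := by
  have h := add_pow x 1 (n+1)
  simp only [one_pow, mul_one] at h
  have h2 : ∑ l ∈ Finset.Icc 1 (n+1), ((n+1).choose l : ℝ) * x ^ l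
      = ∑ i ∈ Finset.range (n+1), ((n+1).choose (i+1) : ℝ) * x ^ (i+1) := by
    rw [← Finset.Ico_add_one_right_eq_Icc, Finset.sum_Ico_eq_sum_range]
    simp [add_comm 1]
  rw [h2]
  have h3 := Finset.sum_range_succ' (fun k => x ^ k * ((n+1).choose k : ℝ)) (n+1)
  rw [h3] at h
  have : (1:ℝ) + x = x + 1 := by ring
  rw [this, h]
  simp [mul_comm]

lemma aux_sum (n : ℕ) (x : ℝ) :
    ∑ l ∈ Finset.Icc 1 (n+1), (n.choose (l-1) : ℝ) * x ^ l / l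
      = ((1+x)^(n+1) - 1) / (n+1) := by
  have h1 : ∀ l ∈ Finset.Icc 1 (n+1), (n.choose (l-1) : ℝ) * x ^ l / l
      = ((n+1).choose l : ℝ) * x ^ l / (n+1) := by
    intro l hl
    simp only [Finset.mem_Icc] at hl
    obtain ⟨k, rfl⟩ : ∃ k, l = k + 1 := ⟨l - 1, by omega⟩
    have hc : ((n:ℝ)+1) * (n.choose k : ℝ) = ((n+1).choose (k+1) : ℝ) * ((k:ℝ)+1) := by
      have := Nat.add_one_mul_choose_eq n k
      exact_mod_cast this
    have hk : ((k:ℝ)+1) ≠ 0 := by positivity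
    have hn : ((n:ℝ)+1) ≠ 0 := by positivity
    field_simp
    push_cast
    linear_combination x ^ (k + 1) * hc
  rw [Finset.sum_congr rfl h1, ← Finset.sum_div, aux_binom]


/-- For every natural number `n` and real `x`,
`∑_{l=1}^n C(n,l) x^l / l = ∑_{l=1}^n ((1+x)^l - 1)/l`. -/
theorem sum_choose_pow_div_eq (n : ℕ) (x : ℝ) :
    ∑ l ∈ Finset.Icc 1 n, (n.choose l : ℝ) * x ^ l / l
      = ∑ l ∈ Finset.Icc 1 n, ((1 + x) ^ l - 1) / l := by
  induction n with
  | zero => simp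
  | succ n ih =>
    have hsplit : ∑ l ∈ Finset.Icc 1 (n+1), ((n+1).choose l : ℝ) * x ^ l / l
        = ∑ l ∈ Finset.Icc 1 (n+1), (n.choose l : ℝ) * x ^ l / l
          + ∑ l ∈ Finset.Icc 1 (n+1), (n.choose (l-1) : ℝ) * x ^ l / l := by
      rw [← Finset.sum_add_distrib]
      apply Finset.sum_congr rfl
      intro l hl
      simp only [Finset.mem_Icc] at hl
      obtain ⟨k, rfl⟩ : ∃ k, l = k + 1 := ⟨l - 1, by omega⟩
      rw [Nat.choose_succ_succ]
      push_cast
      ring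
    have htrunc : ∑ l ∈ Finset.Icc 1 (n+1), (n.choose l : ℝ) * x ^ l / l
        = ∑ l ∈ Finset.Icc 1 n, (n.choose l : ℝ) * x ^ l / l := by
      rw [Finset.sum_Icc_succ_top (by omega)]
      simp [Nat.choose_succ_self]
    rw [hsplit, htrunc, ih, aux_sum, Finset.sum_Icc_succ_top (by omega)]
    push_cast
    ring
end

section
/- For every natural number n ≥ 1 and every real number d, ∑_{l=1}^{n} ((−1)^l · d/(2(l+1))) · C(n+1, l+1) · (n+2 − d^l) + n(n+1)d/2 = ∑_{l=2}^{n+1} (1/(2l)) · (d(n+2) − 1 + (1−d)^l). (This is the computation showing that if G/P is embedded as a degree-d hypersurface in P^{n+1} via L_λ, the height h(G/P, O(1)) equals the right-hand side.) -/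
open Finset

lemma binom_aux (M : ℕ) (x : ℝ) :
    ∑ j ∈ range M, (-1:ℝ)^j * (M.choose (j+1)) * x^(j+1) = 1 - (1-x)^M := by
  have h := add_pow (-x) 1 M
  simp only [one_pow, mul_one] at h
  rw [Finset.sum_range_succ'] at h
  simp at h
  have h2 : (1 - x)^M = (-x + 1)^M := by ring_nf
  rw [h2, h]
  have h3 : (1:ℝ) - (∑ k ∈ range M, (-x)^(k+1) * (M.choose (k+1)) + 1)
      = ∑ k ∈ range M, -((-x)^(k+1) * (M.choose (k+1))) := by
    rw [Finset.sum_neg_distrib]; ring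
  rw [h3]
  apply Finset.sum_congr rfl
  intro j _
  rw [neg_pow, pow_succ]
  ring

lemma key (N : ℕ) (x : ℝ) :
    ∑ j ∈ range N, (-1:ℝ)^j * (N.choose (j+1)) * x^(j+1) / (j+1)
      = ∑ l ∈ range N, (1 - (1-x)^(l+1))/(l+1) := by
  induction N with
  | zero => simp
  | succ N ih =>
    rw [Finset.sum_range_succ (f := fun l => ((1:ℝ) - (1-x)^(l+1))/(l+1)), ← ih]
    have step1 : ∑ j ∈ range (N+1), (-1:ℝ)^j * ((N+1).choose (j+1)) * x^(j+1) / (j+1)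
        = ∑ j ∈ range (N+1), ((-1:ℝ)^j * (N.choose (j+1)) * x^(j+1) / (j+1)
            + (-1:ℝ)^j * (N.choose j) * x^(j+1) / (j+1)) := by
      apply Finset.sum_congr rfl
      intro j _
      have hp : ((N+1).choose (j+1) : ℝ) = (N.choose j : ℝ) + (N.choose (j+1) : ℝ) := by
        exact_mod_cast congrArg (Nat.cast : ℕ → ℝ) (Nat.choose_succ_succ N j)
      rw [hp]; ring
    rw [step1, Finset.sum_add_distrib]
    have hA : ∑ j ∈ range (N+1), (-1:ℝ)^j * (N.choose (j+1)) * x^(j+1) / (j+1)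
        = ∑ j ∈ range N, (-1:ℝ)^j * (N.choose (j+1)) * x^(j+1) / (j+1) := by
      rw [Finset.sum_range_succ]
      simp [Nat.choose_succ_self]
    have hB : ∑ j ∈ range (N+1), (-1:ℝ)^j * (N.choose j) * x^(j+1) / (j+1)
        = (1 - (1-x)^(N+1)) / (N+1) := by
      have hterm : ∀ j ∈ range (N+1),
          (-1:ℝ)^j * (N.choose j) * x^(j+1) / (j+1)
            = ((-1:ℝ)^j * ((N+1).choose (j+1)) * x^(j+1)) / (N+1) := by
        intro j _
        have h := Nat.add_one_mul_choose_eq N j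
        have h' : ((N:ℝ)+1) * (N.choose j) = ((N+1).choose (j+1)) * ((j:ℝ)+1) := by
          exact_mod_cast congrArg (Nat.cast : ℕ → ℝ) h
        have hj : ((j:ℝ)+1) ≠ 0 := by positivity
        have hN : ((N:ℝ)+1) ≠ 0 := by positivity
        rw [div_eq_div_iff hj hN]
        linear_combination ((-1:ℝ)^j * x^(j+1)) * h'
      rw [Finset.sum_congr rfl hterm, ← Finset.sum_div, binom_aux]
    rw [hA, hB]

lemma shifted (n : ℕ) (x : ℝ) :
    ∑ j ∈ range n, (-1:ℝ)^(j+1) * ((n+1).choose (j+2)) * x^(j+2) / ((j:ℝ)+2)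
      = (∑ l ∈ range (n+1), (1 - (1-x)^(l+1))/((l:ℝ)+1)) - ((n:ℝ)+1)*x := by
  have h := key (n+1) x
  rw [Finset.sum_range_succ'] at h
  simp only [pow_zero, one_mul, Nat.choose_one_right, pow_one, Nat.cast_zero, zero_add,
    div_one, Nat.cast_add, Nat.cast_one] at h
  have : ∀ j ∈ range n, (-1:ℝ)^(j+1) * ((n+1).choose (j+1+1)) * x^(j+1+1) / ((j:ℝ)+1+1)
      = (-1:ℝ)^(j+1) * ((n+1).choose (j+2)) * x^(j+2) / ((j:ℝ)+2) := by
    intro j _; ring_nf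
  rw [Finset.sum_congr rfl this] at h
  linarith [h]

/-- For `n ≥ 1` and real `d`,
`∑_{l=1}^n ((-1)^l d / (2(l+1))) C(n+1,l+1) (n+2 - d^l) + n(n+1)d/2
  = ∑_{l=2}^{n+1} (1/(2l)) (d(n+2) - 1 + (1-d)^l)`. -/
theorem hypersurface_height_identity (n : ℕ) (hn : 1 ≤ n) (d : ℝ) :
    (∑ l ∈ Finset.Icc 1 n,
        ((-1 : ℝ) ^ l * d / (2 * (l + 1))) * ((n + 1).choose (l + 1)) * (n + 2 - d ^ l))
      + n * (n + 1) * d / 2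
      = ∑ l ∈ Finset.Icc 2 (n + 1), (1 / (2 * l)) * (d * (n + 2) - 1 + (1 - d) ^ l) := by
  set H : ℝ := ∑ l ∈ range (n+1), 1/((l:ℝ)+1) with hH
  set S : ℝ := ∑ l ∈ range (n+1), (1-d)^(l+1)/((l:ℝ)+1) with hS
  -- Fact 1 : x = 1 case of shifted
  have F1 : ∑ j ∈ range n, (-1:ℝ)^(j+1) * ((n+1).choose (j+2)) / ((j:ℝ)+2)
      = H - ((n:ℝ)+1) := by
    have h := shifted n 1
    simp only [one_pow, mul_one, sub_self, zero_pow (Nat.succ_ne_zero _), sub_zero] at h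
    rw [hH]; exact h
  -- Fact 2 : x = d case
  have F2 : ∑ j ∈ range n, (-1:ℝ)^(j+1) * ((n+1).choose (j+2)) * d^(j+2) / ((j:ℝ)+2)
      = (H - S) - ((n:ℝ)+1)*d := by
    have h := shifted n d
    have h2 : ∑ l ∈ range (n+1), (1 - (1-d)^(l+1))/((l:ℝ)+1) = H - S := by
      rw [hH, hS, ← Finset.sum_sub_distrib]
      apply Finset.sum_congr rfl
      intro l _; ring
    rw [h2] at h; exact h
  -- Fact 3,4 : peeling the first term of H and S
  have F3 : ∑ j ∈ range n, 1/((j:ℝ)+2) = H - 1 := by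
    rw [hH, Finset.sum_range_succ']
    have : ∀ i ∈ range n, (1:ℝ)/((((i:ℕ)+1:ℕ):ℝ)+1) = 1/((i:ℝ)+2) := by
      intro i _; push_cast; ring_nf
    rw [Finset.sum_congr rfl this]
    norm_num
  have F4 : ∑ j ∈ range n, (1-d)^(j+2)/((j:ℝ)+2) = S - (1-d) := by
    rw [hS, Finset.sum_range_succ']
    have : ∀ i ∈ range n, (1-d)^((i:ℕ)+1+1)/((((i:ℕ)+1:ℕ):ℝ)+1) = (1-d)^(i+2)/((i:ℝ)+2) := by
      intro i _; push_cast; ring_nf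
    rw [Finset.sum_congr rfl this]
    push_cast
    ring
  -- convert the Icc sums to range sums
  rw [← Finset.Ico_add_one_right_eq_Icc, ← Finset.Ico_add_one_right_eq_Icc, Finset.sum_Ico_eq_sum_range,
    Finset.sum_Ico_eq_sum_range]
  simp only [Nat.add_sub_cancel, show n + 1 - 1 = n from by omega,
    show n + 1 + 1 - 2 = n from by omega]
  have hL : ∑ j ∈ range n,
      ((-1:ℝ)^(1+j) * d / (2 * ((1+j : ℕ) + 1))) * ((n + 1).choose ((1+j) + 1))
        * ((n:ℝ) + 2 - d ^ (1+j))
      = d*((n:ℝ)+2)/2 * (H - ((n:ℝ)+1)) - (1/2) * ((H - S) - ((n:ℝ)+1)*d) := by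
    rw [← F1, ← F2, Finset.mul_sum, Finset.mul_sum, ← Finset.sum_sub_distrib]
    apply Finset.sum_congr rfl
    intro j _
    have e1 : 1 + j + 1 = j + 2 := by omega
    have e2 : 1 + j = j + 1 := by omega
    rw [e1, e2]
    push_cast
    have hj : ((j:ℝ)+2) ≠ 0 := by positivity
    field_simp
    ring
  have hR : ∑ j ∈ range n,
      (1 / (2 * ((2+j : ℕ) : ℝ))) * (d * ((n:ℝ) + 2) - 1 + (1 - d) ^ (2+j))
      = (d*((n:ℝ)+2)-1)/2 * (H - 1) + (1/2) * (S - (1-d)) := by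
    rw [← F3, ← F4, Finset.mul_sum, Finset.mul_sum, ← Finset.sum_add_distrib]
    apply Finset.sum_congr rfl
    intro j _
    have e1 : 2 + j = j + 2 := by omega
    rw [e1]
    push_cast
    have hj : ((j:ℝ)+2) ≠ 0 := by positivity
    field_simp
  push_cast
  push_cast at hL hR
  rw [hL, hR]
  ring
end

section
/- For every natural number n ≥ 1, ∑_{l=0}^{n} ((−1)^l/(l+1)) · C(n+1, l+1) · (2^{l+1} − 1) = ∑_{l=1}^{n+1} (−1)^{l+1}/l. (This is the additional term in the height of the odd-dimensional quadric coming from the summand E_2 = O(1) of the tangent bundle, computed with degree d = 2.) -/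
open Finset

lemma binsum (m : ℕ) (x : ℚ) :
    ∑ k ∈ range (m+1), (m.choose k : ℚ) * x^k = (x+1)^m := by
  rw [add_pow]
  simp [mul_comm]

lemma binsum' (m : ℕ) (x : ℚ) :
    ∑ l ∈ range (m+1), (((m+1).choose (l+1)) : ℚ) * x^(l+1) = (x+1)^(m+1) - 1 := by
  have h := binsum (m+1) x
  rw [Finset.sum_range_succ'] at h
  simp only [Nat.choose_zero_right, Nat.cast_one, pow_zero, one_mul, mul_one] at h
  linarith

lemma Dlem (n : ℕ) :
    ∑ l ∈ range (n+2), ((-1:ℚ)^l / (l+1)) * ((n+1).choose l) * (2^(l+1) - 1)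
      = (-1)^(n+1) / (n+2) := by
  have key : ∀ l ∈ range (n+2),
      ((-1:ℚ)^l / (l+1)) * ((n+1).choose l) * (2^(l+1) - 1)
      = (1/(n+2)) * (-((((n+2).choose (l+1)) : ℚ) * (-2)^(l+1))
          + (((n+2).choose (l+1)) : ℚ) * (-1)^(l+1)) := by
    intro l _
    have hb : ((n:ℚ)+2) * ((n+1).choose l) = (((n+2).choose (l+1)) : ℚ) * ((l:ℚ)+1) := by
      have := Nat.add_one_mul_choose_eq (n+1) l
      exact_mod_cast congrArg (Nat.cast : ℕ → ℚ) this
    have hl : ((l:ℚ)+1) ≠ 0 := by positivity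
    have hn2 : ((n:ℚ)+2) ≠ 0 := by positivity
    have h2 : ((-2:ℚ))^(l+1) = (-1)^(l+1) * 2^(l+1) := by
      rw [← mul_pow]; norm_num
    rw [h2, pow_succ (-1:ℚ) l]
    field_simp
    linear_combination ((2:ℚ)^(l+1)-1) * hb
  rw [Finset.sum_congr rfl key, ← Finset.mul_sum, Finset.sum_add_distrib]
  rw [Finset.sum_neg_distrib, binsum' (n+1) (-2), binsum' (n+1) (-1)]
  norm_num
  rw [show n+2 = (n+1)+1 by ring, pow_succ]
  field_simp
  ring

/-- For `n ≥ 1`,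
`∑_{l=0}^n ((-1)^l/(l+1)) C(n+1,l+1) (2^{l+1} - 1) = ∑_{l=1}^{n+1} (-1)^{l+1}/l`
as rational numbers. -/
theorem odd_quadric_extra_term (n : ℕ) (hn : 1 ≤ n) :
    ∑ l ∈ Finset.range (n + 1),
        ((-1 : ℚ) ^ l / (l + 1)) * ((n + 1).choose (l + 1)) * (2 ^ (l + 1) - 1)
      = ∑ l ∈ Finset.Icc 1 (n + 1), (-1 : ℚ) ^ (l + 1) / l := by
  induction n, hn using Nat.le_induction with
  | base =>
      norm_num [Finset.sum_range_succ, show Finset.Icc 1 (1+1) = {1, 2} from rfl]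
  | succ n hn ih =>
      have hsplit : ∀ l ∈ Finset.range (n + 2),
          ((-1 : ℚ) ^ l / (l + 1)) * ((n + 2).choose (l + 1)) * (2 ^ (l + 1) - 1)
          = ((-1 : ℚ) ^ l / (l + 1)) * ((n + 1).choose l) * (2 ^ (l + 1) - 1)
            + ((-1 : ℚ) ^ l / (l + 1)) * ((n + 1).choose (l + 1)) * (2 ^ (l + 1) - 1) := by
        intro l _
        rw [Nat.choose_succ_succ (n+1) l]
        push_cast
        ring
      rw [Finset.sum_congr rfl hsplit, Finset.sum_add_distrib, Dlem n,
        Finset.sum_range_succ]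
      rw [show (n+1).choose (n+1+1) = 0 from Nat.choose_succ_self (n+1)]
      rw [show ((n+1)+1) = (n+1)+1 from rfl]
      rw [Finset.sum_Icc_succ_top (by omega : 1 ≤ n + 2)]
      push_cast
      rw [ih]
      ring
end

section
/- For every natural number m ≥ 1, ∑_{l=2}^{2m+1} (4m + 3 + (−1)^l)/(2l) = (2m+1)·∑_{k=1}^{2m−1} 1/k + (1/2)·∑_{k=1}^{m−1} 1/k − 2m + 1 + 1/m. (This recovers the Cassaigne–Maillot formula for the height of the even-dimensional smooth quadric Q_{2m} from the general hypersurface height identity with degree d = 2 and dimension n = 2m.) -/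
open Finset

lemma icc_top (f : ℕ → ℚ) (a n : ℕ) (h : a ≤ n + 1) :
    ∑ k ∈ Icc a (n+1), f k = (∑ k ∈ Icc a n, f k) + f (n+1) :=
  Finset.sum_Icc_succ_top h f

lemma icc_bot (f : ℕ → ℚ) (n : ℕ) (h : 1 ≤ n) :
    ∑ k ∈ Icc 1 n, f k = f 1 + ∑ k ∈ Icc 2 n, f k := by
  have : Finset.Icc 1 n = insert 1 (Finset.Icc 2 n) := by
    ext x; simp only [Finset.mem_Icc, Finset.mem_insert]; omega
  rw [this, Finset.sum_insert (by simp)]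

lemma alt (n : ℕ) : ∑ l ∈ Icc 2 (2*n+1), ((-1:ℚ)^l)/l
    = 1 - (∑ k ∈ Icc 1 (2*n+1), (1:ℚ)/k) + ∑ k ∈ Icc 1 n, (1:ℚ)/k := by
  induction n with
  | zero => norm_num
  | succ n ih =>
    have e1 : 2*(n+1)+1 = (2*n+2)+1 := by ring
    rw [e1, icc_top _ 2 (2*n+2) (by omega), icc_top _ 2 (2*n+1) (by omega),
      icc_top _ 1 (2*n+2) (by omega), icc_top _ 1 (2*n+1) (by omega),
      icc_top _ 1 n (by omega), ih]
    have h1 : ((-1:ℚ))^(2*n+1+1) = 1 := Even.neg_one_pow ⟨n+1, by ring⟩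
    have h2 : ((-1:ℚ))^(2*n+2+1) = -1 := Odd.neg_one_pow ⟨n+1, by ring⟩
    rw [h1, h2]
    push_cast
    have a1 : (2*(n:ℚ)+1+1) ≠ 0 := by positivity
    have a2 : (2*(n:ℚ)+2+1) ≠ 0 := by positivity
    have a3 : ((n:ℚ)+1) ≠ 0 := by positivity
    field_simp
    ring

/-- Cassaigne–Maillot formula for the height of the even-dimensional quadric `Q_{2m}`:
for `m ≥ 1`,
`∑_{l=2}^{2m+1} (4m+3+(-1)^l)/(2l)
  = (2m+1) ∑_{k=1}^{2m-1} 1/k + (1/2) ∑_{k=1}^{m-1} 1/k - 2m + 1 + 1/m`. -/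
theorem even_quadric_height (m : ℕ) (hm : 1 ≤ m) :
    ∑ l ∈ Finset.Icc 2 (2 * m + 1), (4 * m + 3 + (-1 : ℚ) ^ l) / (2 * l)
      = (2 * m + 1) * (∑ k ∈ Finset.Icc 1 (2 * m - 1), (1 : ℚ) / k)
        + (1 / 2) * (∑ k ∈ Finset.Icc 1 (m - 1), (1 : ℚ) / k)
        - 2 * m + 1 + 1 / m := by
  obtain ⟨n, rfl⟩ : ∃ n, m = n + 1 := ⟨m - 1, by omega⟩
  have key : ∀ l ∈ Finset.Icc 2 (2*(n+1)+1),
      (4 * ((n:ℚ)+1) + 3 + (-1 : ℚ) ^ l) / (2 * l)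
        = (4*((n:ℚ)+1)+3)/2 * ((1:ℚ)/l) + (1/2) * (((-1:ℚ)^l)/l) := by
    intro l hl
    simp only [Finset.mem_Icc] at hl
    have : (l:ℚ) ≠ 0 := by exact_mod_cast (by omega : l ≠ 0)
    field_simp
  simp only [show 2*(n+1)-1 = 2*n+1 from by omega, show n+1-1 = n from by omega]
  push_cast
  rw [Finset.sum_congr rfl key, Finset.sum_add_distrib, ← Finset.mul_sum, ← Finset.mul_sum,
    alt (n+1)]
  have hb : ∑ i ∈ Icc 2 (2*(n+1)+1), (1:ℚ)/i
      = (∑ k ∈ Icc 1 (2*(n+1)+1), (1:ℚ)/k) - 1 := by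
    rw [icc_bot _ _ (by omega)]; norm_num
  rw [hb]
  have e1 : 2*(n+1)+1 = (2*n+2)+1 := by ring
  rw [e1, icc_top _ 1 (2*n+2) (by omega), icc_top _ 1 (2*n+1) (by omega),
    icc_top _ 1 n (by omega)]
  set A := ∑ k ∈ Icc 1 (2*n+1), (1:ℚ)/k
  set B := ∑ k ∈ Icc 1 n, (1:ℚ)/k
  push_cast
  have a1 : (2*(n:ℚ)+1+1) ≠ 0 := by positivity
  have a2 : (2*(n:ℚ)+2+1) ≠ 0 := by positivity
  have a3 : ((n:ℚ)+1) ≠ 0 := by positivity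
  field_simp
  ring
end

section
/- For every natural number m ≥ 1, ∑_{l=2}^{2m} (4m + 1 + (−1)^l)/(2l) + ∑_{l=1}^{2m} (−1)^{l+1}/l = (2m+1)·∑_{k=1}^{2m−1} 1/k − (1/2)·∑_{k=1}^{m−1} 1/k − 2m + 1. (This computes the height of the odd-dimensional smooth quadric Q_{2m−1}: the hypersurface height identity with d = 2, n = 2m−1, plus the extra alternating-harmonic term coming from E_2 = O(1).) -/
lemma alt_sum (n : ℕ) : ∑ l ∈ Finset.Icc 1 (2*n), (-1:ℚ)^(l+1)/l
    = ∑ k ∈ Finset.Icc 1 (2*n), (1:ℚ)/k - ∑ k ∈ Finset.Icc 1 n, (1:ℚ)/k := by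
  induction n with
  | zero => simp
  | succ n ih =>
    have h1 : 2*(n+1) = 2*n+1+1 := by ring
    rw [h1, Finset.sum_Icc_succ_top (by omega), Finset.sum_Icc_succ_top (by omega),
      Finset.sum_Icc_succ_top (by omega), Finset.sum_Icc_succ_top (by omega),
      Finset.sum_Icc_succ_top (by omega), ih]
    push_cast
    have e1 : ((2:ℚ)*n+1) ≠ 0 := by positivity
    have e2 : ((2:ℚ)*n+1+1) ≠ 0 := by positivity
    have e3 : ((n:ℚ)+1) ≠ 0 := by positivity
    simp only [pow_succ, pow_mul]
    field_simp
    ring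

lemma ins (n : ℕ) (hn : 1 ≤ n) : Finset.Icc 1 n = insert 1 (Finset.Icc 2 n) := by
  ext x
  simp only [Finset.mem_Icc, Finset.mem_insert]
  omega

/-- Height of the odd-dimensional quadric `Q_{2m-1}`: for `m ≥ 1`,
`∑_{l=2}^{2m} (4m+1+(-1)^l)/(2l) + ∑_{l=1}^{2m} (-1)^{l+1}/l
  = (2m+1) ∑_{k=1}^{2m-1} 1/k - (1/2) ∑_{k=1}^{m-1} 1/k - 2m + 1`. -/
theorem odd_quadric_height (m : ℕ) (hm : 1 ≤ m) :
    ∑ l ∈ Finset.Icc 2 (2 * m), (4 * m + 1 + (-1 : ℚ) ^ l) / (2 * l)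
      + ∑ l ∈ Finset.Icc 1 (2 * m), (-1 : ℚ) ^ (l + 1) / l
      = (2 * m + 1) * (∑ k ∈ Finset.Icc 1 (2 * m - 1), (1 : ℚ) / k)
        - (1 / 2) * (∑ k ∈ Finset.Icc 1 (m - 1), (1 : ℚ) / k)
        - 2 * m + 1 := by
  obtain ⟨p, rfl⟩ : ∃ p, m = p + 1 := ⟨m - 1, by omega⟩
  have hterm : ∀ l ∈ Finset.Icc 2 (2*(p+1)),
      (4 * (((p:ℚ))+1) + 1 + (-1 : ℚ) ^ l) / (2 * l)
        = (4*((p:ℚ)+1)+1)/2 * ((1:ℚ)/l) - (1/2) * ((-1:ℚ)^(l+1)/l) := by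
    intro l hl
    have hl0 : (l:ℚ) ≠ 0 := by
      have : 2 ≤ l := (Finset.mem_Icc.mp hl).1
      positivity
    rw [pow_succ]
    field_simp
    ring
  push_cast
  rw [Finset.sum_congr rfl hterm, Finset.sum_sub_distrib, ← Finset.mul_sum, ← Finset.mul_sum,
    show 2*(p+1)-1 = 2*p+1 from by omega]
  -- atoms
  set a := ∑ k ∈ Finset.Icc 1 (2*p+1), (1:ℚ)/k with ha
  set b := ∑ k ∈ Finset.Icc 1 p, (1:ℚ)/k with hb
  have hr1 : 2*(p+1) = (2*p+1) + 1 := by omega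
  have hr2 : p+1 = p + 1 := rfl
  have hS1 : ∑ k ∈ Finset.Icc 1 (2*(p+1)), (1:ℚ)/k = a + 1/(2*(p:ℚ)+2) := by
    rw [hr1, Finset.sum_Icc_succ_top (by omega), ha]
    push_cast
    ring
  have hS2 : ∑ k ∈ Finset.Icc 1 (p+1), (1:ℚ)/k = b + 1/((p:ℚ)+1) := by
    rw [Finset.sum_Icc_succ_top (by omega), hb]
    push_cast
    ring
  have hA : ∑ l ∈ Finset.Icc 1 (2*(p+1)), (-1:ℚ)^(l+1)/l
      = a + 1/(2*(p:ℚ)+2) - (b + 1/((p:ℚ)+1)) := by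
    rw [alt_sum, hS1, hS2]
  have hX : ∑ l ∈ Finset.Icc 2 (2*(p+1)), (1:ℚ)/l = a + 1/(2*(p:ℚ)+2) - 1 := by
    have := hS1
    rw [ins _ (by omega), Finset.sum_insert (by simp)] at this
    push_cast at this
    linarith
  have hY : ∑ l ∈ Finset.Icc 2 (2*(p+1)), (-1:ℚ)^(l+1)/l
      = a + 1/(2*(p:ℚ)+2) - (b + 1/((p:ℚ)+1)) - 1 := by
    have := hA
    rw [ins _ (by omega), Finset.sum_insert (by simp)] at this
    push_cast at this
    linarith
  rw [hX, hY, hA]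
  have e2 : ((p:ℚ)+1) ≠ 0 := by positivity
  have ht : 1/(2*(p:ℚ)+2) = 1/2 * (1/((p:ℚ)+1)) := by
    rw [div_mul_div_comm, one_mul]
    congr 1
    ring
  have hu : ((p:ℚ)+1) * (1/((p:ℚ)+1)) = 1 := by
    field_simp
  rw [ht]
  linear_combination hu
end

section
/- Let Q(X,Y) be a polynomial in two variables with real coefficients of total degree at most n, and let j be a positive integer. Then there exists a constant C > 0 such that for every integer m ≥ 2, | ∑_{k=1}^{jm} Q(m,k)·log k − ∫_{1}^{jm} Q(m,t)·log t \, dt | ≤ C · m^n · log m. (This is the sum-versus-integral approximation, with the required uniformity in m, used in the asymptotic computation of the covolume term r(m) in the proof of the height formula for generalized flag varieties.) -/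
open MeasureTheory

lemma monomial_core (l N : ℕ) (hN : 1 ≤ N) :
    |(∑ k ∈ Finset.Icc 1 N, (k:ℝ)^l * Real.log k)
      - ∫ t in (1:ℝ)..(N:ℝ), t^l * Real.log t| ≤ (N:ℝ)^l * Real.log N := by
  set f : ℝ → ℝ := fun x => x^l * Real.log x with hf
  have hmono : MonotoneOn f (Set.Icc ((1:ℕ):ℝ) ((N:ℕ):ℝ)) := by
    intro x hx y hy hxy
    have hx1 : (1:ℝ) ≤ x := by simpa using hx.1
    have hy1 : (1:ℝ) ≤ y := le_trans hx1 hxy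
    simp only [hf]
    apply mul_le_mul (pow_le_pow_left₀ (by linarith) hxy l)
      (Real.log_le_log (by linarith) hxy) (Real.log_nonneg hx1)
      (pow_nonneg (by linarith) l)
  have h1 := hmono.sum_le_integral_Ico hN
  have h2 := hmono.integral_le_sum_Ico hN
  have hS : ∑ k ∈ Finset.Icc 1 N, f k = (∑ i ∈ Finset.Ico 1 N, f i) + f N := by
    rw [← Finset.sum_Ico_succ_top hN]
    rfl
  have hS' : ∑ k ∈ Finset.Icc 1 N, f k = f 1 + ∑ i ∈ Finset.Ico 1 N, f ((i:ℕ) + 1 : ℕ) := by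
    rw [← Finset.Ico_add_one_right_eq_Icc, Finset.sum_eq_sum_Ico_succ_bot (by omega)]
    congr 1
    · norm_num
    rw [Finset.sum_Ico_eq_sum_range, Finset.sum_Ico_eq_sum_range]
    apply Finset.sum_congr (by rw [show N + 1 - 2 = N - 1 by omega])
    intro i _
    congr 2
    omega
  have hf1 : f 1 = 0 := by simp [hf]
  have key : |(∑ k ∈ Finset.Icc 1 N, f k) - ∫ x in ((1:ℕ):ℝ)..((N:ℕ):ℝ), f x| ≤ f N := by
    rw [abs_le]
    push_cast at h1 h2 hS hS' hf1 ⊢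
    constructor <;> linarith
  simpa only [hf, Nat.cast_one] using key

/-- Sum-versus-integral approximation of `∑_{k=1}^{jm} Q(m,k) log k`, uniformly in `m`:
if `Q` is a real polynomial in two variables of total degree at most `n` and `j ≥ 1`,
then there is `C > 0` such that for all integers `m ≥ 2`,
`|∑_{k=1}^{jm} Q(m,k) log k − ∫_1^{jm} Q(m,t) log t dt| ≤ C m^n log m`. -/
theorem sum_sub_integral_log_estimate
    (n : ℕ) (Q : MvPolynomial (Fin 2) ℝ) (hQ : Q.totalDegree ≤ n)
    (j : ℕ) (hj : 1 ≤ j) :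
    ∃ C : ℝ, 0 < C ∧ ∀ m : ℕ, 2 ≤ m →
      |(∑ k ∈ Finset.Icc 1 (j * m),
            MvPolynomial.eval ![(m : ℝ), (k : ℝ)] Q * Real.log k)
          - ∫ t in (1 : ℝ)..(j * m : ℕ),
              MvPolynomial.eval ![(m : ℝ), t] Q * Real.log t|
        ≤ C * (m : ℝ) ^ n * Real.log m := by
  classical
  set c0 : ℝ := ∑ d ∈ Q.support, |Q.coeff d| with hc0def
  have hc0 : 0 ≤ c0 := Finset.sum_nonneg fun _ _ => abs_nonneg _
  have hj1 : (1:ℝ) ≤ (j:ℝ) := by exact_mod_cast hj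
  have hlog2 : 0 < Real.log 2 := Real.log_pos (by norm_num)
  set c1 : ℝ := Real.log j / Real.log 2 + 1 with hc1def
  have hc1 : 1 ≤ c1 := by
    have h0 : 0 ≤ Real.log j / Real.log 2 :=
      div_nonneg (Real.log_nonneg hj1) hlog2.le
    simp only [hc1def]; linarith
  refine ⟨c0 * (j:ℝ)^n * c1 + 1, by positivity, ?_⟩
  intro m hm
  set N := j * m with hNdef
  have hN2 : 2 ≤ N := by simpa using Nat.mul_le_mul hj hm
  have hN1 : 1 ≤ N := by omega
  have hm1 : (1:ℝ) ≤ (m:ℝ) := by exact_mod_cast (by omega : 1 ≤ m)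
  have hmR : (2:ℝ) ≤ (m:ℝ) := by exact_mod_cast hm
  have hlogm : 0 < Real.log m := Real.log_pos (by linarith)
  have hNcast : ((N:ℕ):ℝ) = (j:ℝ) * (m:ℝ) := by push_cast [hNdef]; ring
  have hlogN : Real.log ((j:ℝ) * (m:ℝ)) ≤ c1 * Real.log m := by
    rw [Real.log_mul (by positivity) (by positivity)]
    have h1 : Real.log j ≤ (Real.log j / Real.log 2) * Real.log m := by
      rw [div_mul_eq_mul_div, le_div_iff₀ hlog2]
      exact mul_le_mul_of_nonneg_left (Real.log_le_log (by norm_num) hmR)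
        (Real.log_nonneg hj1)
    simp only [hc1def]
    nlinarith
  have heval : ∀ x : ℝ, MvPolynomial.eval ![(m:ℝ), x] Q
      = ∑ d ∈ Q.support, Q.coeff d * ((m:ℝ)^(d 0) * x^(d 1)) := by
    intro x
    rw [MvPolynomial.eval_eq']
    apply Finset.sum_congr rfl
    intro d _
    congr 1
    rw [Fin.prod_univ_two]
    simp
  have hsum : (∑ k ∈ Finset.Icc 1 N, MvPolynomial.eval ![(m:ℝ),(k:ℝ)] Q * Real.log k)
      = ∑ d ∈ Q.support, Q.coeff d * (m:ℝ)^(d 0)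
          * (∑ k ∈ Finset.Icc 1 N, (k:ℝ)^(d 1) * Real.log k) := by
    simp_rw [heval, Finset.sum_mul, Finset.mul_sum]
    rw [Finset.sum_comm]
    apply Finset.sum_congr rfl
    intro d _
    apply Finset.sum_congr rfl
    intro k _
    ring
  have hinteg : ∀ l : ℕ, IntervalIntegrable (fun t => t^l * Real.log t)
      volume (1:ℝ) ((N:ℕ):ℝ) := by
    intro l
    apply ContinuousOn.intervalIntegrable
    apply ContinuousOn.mul (continuous_pow l).continuousOn
    apply Real.continuousOn_log.mono
    intro x hx
    have hle : (1:ℝ) ≤ ((N:ℕ):ℝ) := by exact_mod_cast hN1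
    rw [Set.uIcc_of_le hle] at hx
    simp only [Set.mem_compl_iff, Set.mem_singleton_iff]
    intro h
    rw [h] at hx
    have := hx.1
    norm_num at this
  have hint : (∫ t in (1:ℝ)..((N:ℕ):ℝ), MvPolynomial.eval ![(m:ℝ), t] Q * Real.log t)
      = ∑ d ∈ Q.support, Q.coeff d * (m:ℝ)^(d 0)
          * (∫ t in (1:ℝ)..((N:ℕ):ℝ), t^(d 1) * Real.log t) := by
    have e1 : (∫ t in (1:ℝ)..((N:ℕ):ℝ), MvPolynomial.eval ![(m:ℝ), t] Q * Real.log t)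
        = ∫ t in (1:ℝ)..((N:ℕ):ℝ),
            ∑ d ∈ Q.support, Q.coeff d * (m:ℝ)^(d 0) * (t^(d 1) * Real.log t) := by
      apply intervalIntegral.integral_congr
      intro t _
      simp only
      rw [heval t, Finset.sum_mul]
      apply Finset.sum_congr rfl
      intro d _
      ring
    rw [e1, intervalIntegral.integral_finset_sum]
    · apply Finset.sum_congr rfl
      intro d _
      exact intervalIntegral.integral_const_mul _ _
    · intro d _
      exact (hinteg (d 1)).const_mul _
  rw [hsum, hint, ← Finset.sum_sub_distrib]
  simp_rw [← mul_sub]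
  refine le_trans (Finset.abs_sum_le_sum_abs _ _) ?_
  have hbound : ∀ d ∈ Q.support,
      |Q.coeff d * (m:ℝ)^(d 0)
        * ((∑ k ∈ Finset.Icc 1 N, (k:ℝ)^(d 1) * Real.log k)
            - ∫ t in (1:ℝ)..((N:ℕ):ℝ), t^(d 1) * Real.log t)|
      ≤ |Q.coeff d| * ((j:ℝ)^n * (m:ℝ)^n * (c1 * Real.log m)) := by
    intro d hd
    have hdeg : d 0 + d 1 ≤ n := by
      have h := MvPolynomial.le_totalDegree hd
      have hsum2 : (d.sum fun _ e => e) = d 0 + d 1 := by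
        rw [Finsupp.sum_fintype _ _ (fun _ => rfl), Fin.sum_univ_two]
      omega
    have hd1 : d 1 ≤ n := by omega
    rw [abs_mul, abs_mul, abs_pow, abs_of_nonneg (by positivity : (0:ℝ) ≤ (m:ℝ)), mul_assoc]
    apply mul_le_mul_of_nonneg_left _ (abs_nonneg _)
    calc (m:ℝ)^(d 0) * |(∑ k ∈ Finset.Icc 1 N, (k:ℝ)^(d 1) * Real.log k)
            - ∫ t in (1:ℝ)..((N:ℕ):ℝ), t^(d 1) * Real.log t|
        ≤ (m:ℝ)^(d 0) * (((N:ℕ):ℝ)^(d 1) * Real.log N) := by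
          apply mul_le_mul_of_nonneg_left (monomial_core (d 1) N hN1) (by positivity)
      _ = ((m:ℝ)^(d 0) * (m:ℝ)^(d 1) * (j:ℝ)^(d 1)) * Real.log ((j:ℝ)*(m:ℝ)) := by
          rw [hNcast, mul_pow]; ring
      _ ≤ ((m:ℝ)^n * (j:ℝ)^n) * (c1 * Real.log m) := by
          apply mul_le_mul _ hlogN (Real.log_nonneg (by nlinarith)) (by positivity)
          apply mul_le_mul _ (pow_le_pow_right₀ hj1 hd1) (by positivity) (by positivity)
          rw [← pow_add]
          exact pow_le_pow_right₀ hm1 hdeg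
      _ = (j:ℝ)^n * (m:ℝ)^n * (c1 * Real.log m) := by ring
  calc (∑ d ∈ Q.support, |Q.coeff d * (m:ℝ)^(d 0)
          * ((∑ k ∈ Finset.Icc 1 N, (k:ℝ)^(d 1) * Real.log k)
              - ∫ t in (1:ℝ)..((N:ℕ):ℝ), t^(d 1) * Real.log t)|)
      ≤ ∑ d ∈ Q.support, |Q.coeff d| * ((j:ℝ)^n * (m:ℝ)^n * (c1 * Real.log m)) :=
        Finset.sum_le_sum hbound
    _ = (c0 * (j:ℝ)^n * c1) * ((m:ℝ)^n * Real.log m) := by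
        rw [← Finset.sum_mul]; ring
    _ ≤ (c0 * (j:ℝ)^n * c1 + 1) * ((m:ℝ)^n * Real.log m) := by
        apply mul_le_mul_of_nonneg_right (by linarith) (by positivity)
    _ = (c0 * (j:ℝ)^n * c1 + 1) * (m:ℝ)^n * Real.log m := by ring
end
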